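/- arXiv:0704.0208 — 6 statements merged into one kernel-verified Lean document; each statement's English description precedes it below -/
import Mathlib

section
/- Let a_yyy, a_xyy, a_yyx, a1_xyx, ay_xyx, a_yxy, a1_xxy, ay_xxy, a1_yxx, ay_yxx be nonzero complex numbers with the normalizations a_yyx = a1_xyx = a1_xxy = 1. Suppose the nine one-dimensional pentagon equations hold: a_yyy·a_xyy = a_xyy; a_xyy·a1_xxy·ay_xxy = 1; a_yxy·ay_xyx = a1_xyx; a_yxy·a1_xyx = ay_xyx; a_yyx·a_xyy = (a1_xyx)^2; a_yyx·a_xyy = (ay_xyx)^2; (a_yxy)^2 = 1; ay_yxx·a1_yxx·a_yyx = 1; ay_xxy·ay_yxx = a1_yxx·a1_xxy. Then a_yyy = a_xyy = ay_xxy = 1, a_yxy = ay_xyx with a_yxy ∈ {1, −1}, and a1_yxx = ay_yxx with a1_yxx ∈ {1, −1}. -/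
/-- The nine one-dimensional pentagon equations (with the normalizations
`a_yyx = a1_xyx = a1_xxy = 1`) force the stated values of the remaining
one-dimensional associativity scalars. -/
theorem one_dim_pentagon_solutions
    (a_yyy a_xyy a_yyx a1_xyx ay_xyx a_yxy a1_xxy ay_xxy a1_yxx ay_yxx : ℂ)
    (h1 : a_yyy ≠ 0) (h2 : a_xyy ≠ 0) (h3 : a_yyx ≠ 0) (h4 : a1_xyx ≠ 0)
    (h5 : ay_xyx ≠ 0) (h6 : a_yxy ≠ 0) (h7 : a1_xxy ≠ 0) (h8 : ay_xxy ≠ 0)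
    (h9 : a1_yxx ≠ 0) (h10 : ay_yxx ≠ 0)
    (n1 : a_yyx = 1) (n2 : a1_xyx = 1) (n3 : a1_xxy = 1)
    (p1 : a_yyy * a_xyy = a_xyy)
    (p2 : a_xyy * a1_xxy * ay_xxy = 1)
    (p3 : a_yxy * ay_xyx = a1_xyx)
    (p4 : a_yxy * a1_xyx = ay_xyx)
    (p5 : a_yyx * a_xyy = a1_xyx ^ 2)
    (p6 : a_yyx * a_xyy = ay_xyx ^ 2)
    (p7 : a_yxy ^ 2 = 1)
    (p8 : ay_yxx * a1_yxx * a_yyx = 1)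
    (p9 : ay_xxy * ay_yxx = a1_yxx * a1_xxy) :
    a_yyy = 1 ∧ a_xyy = 1 ∧ ay_xxy = 1 ∧
      a_yxy = ay_xyx ∧ (a_yxy = 1 ∨ a_yxy = -1) ∧
      a1_yxx = ay_yxx ∧ (a1_yxx = 1 ∨ a1_yxx = -1) := by
  subst n1 n2 n3
  have key : ∀ z : ℂ, z ^ 2 = 1 → z = 1 ∨ z = -1 := by
    intro z hz
    have h0 : (z - 1) * (z + 1) = 0 := by linear_combination hz
    rcases mul_eq_zero.mp h0 with h | h
    · left; linear_combination h
    · right; linear_combination h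
  have hx : a_xyy = 1 := by linear_combination p5
  subst hx
  have hyyy : a_yyy = 1 := by simpa using p1
  have hxxy : ay_xxy = 1 := by linear_combination p2
  subst hxxy
  have h1yxx : a1_yxx = ay_yxx := by linear_combination -p9
  subst h1yxx
  have hsq : a1_yxx ^ 2 = 1 := by linear_combination p8
  exact ⟨hyyy, rfl, rfl, by linear_combination p4, key _ p7, rfl, key _ hsq⟩
end

section
/- Let A = [[1,0],[0,−1]] and let F be an invertible 2×2 complex matrix with F² = I₂ and −A·F = F·A. Then F = [[0,f],[f⁻¹,0]] for some nonzero f ∈ ℂ. Likewise, if B is an invertible 2×2 complex matrix with B² = I₂ and −B·A = A·B, then B = [[0,b],[b⁻¹,0]] for some nonzero b ∈ ℂ. Moreover, if additionally −B·F = F·B, then f² + b² = 0. -/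
open Matrix

lemma antidiag_aux (M : Matrix (Fin 2) (Fin 2) ℂ) (h2 : M * M = 1)
    (h : -(!![(1 : ℂ), 0; 0, -1] * M) = M * !![(1 : ℂ), 0; 0, -1]) :
    ∃ m : ℂ, m ≠ 0 ∧ M = !![0, m; m⁻¹, 0] := by
  have h00 := congrFun (congrFun h 0) 0
  have h11 := congrFun (congrFun h 1) 1
  have k00 := congrFun (congrFun h2 0) 0
  simp [Matrix.mul_apply, Matrix.vecMul, dotProduct, Fin.sum_univ_two, Matrix.one_apply] at h00 h11 k00
  have hM00 : M 0 0 = 0 := by linear_combination (-1/2 : ℂ) * h00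
  have hM11 : M 1 1 = 0 := by linear_combination (1/2 : ℂ) * h11
  rw [hM00] at k00
  have hprod : M 0 1 * M 1 0 = 1 := by linear_combination k00
  have hne : M 0 1 ≠ 0 := by
    intro h0; rw [h0, zero_mul] at hprod; exact one_ne_zero hprod.symm
  refine ⟨M 0 1, hne, ?_⟩
  have hinv : M 1 0 = (M 0 1)⁻¹ := by
    exact eq_inv_of_mul_eq_one_left (by linear_combination hprod : M 1 0 * M 0 1 = 1)
  ext i j
  fin_cases i <;> fin_cases j <;> simp [hM00, hM11, hinv]

/-- With `A = diag(1,−1)`, the pentagon relations `F² = I`, `−AF = FA` force `F`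
to be an antidiagonal matrix `[[0,f],[f⁻¹,0]]`, similarly for `B`, and the extra
relation `−BF = FB` forces `f² + b² = 0`. -/
theorem antidiagonal_form_of_pentagon
    (F B : Matrix (Fin 2) (Fin 2) ℂ) (hFu : IsUnit F) (hBu : IsUnit B)
    (hF2 : F * F = 1)
    (hAF : -(!![(1 : ℂ), 0; 0, -1] * F) = F * !![(1 : ℂ), 0; 0, -1])
    (hB2 : B * B = 1)
    (hBA : -(B * !![(1 : ℂ), 0; 0, -1]) = !![(1 : ℂ), 0; 0, -1] * B) :
    (∃ f : ℂ, f ≠ 0 ∧ F = !![0, f; f⁻¹, 0]) ∧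
    (∃ b : ℂ, b ≠ 0 ∧ B = !![0, b; b⁻¹, 0]) ∧
    (-(B * F) = F * B →
      ∀ f b : ℂ, f ≠ 0 → b ≠ 0 → F = !![0, f; f⁻¹, 0] → B = !![0, b; b⁻¹, 0] →
        f ^ 2 + b ^ 2 = 0) := by
  have hBA' : -(!![(1 : ℂ), 0; 0, -1] * B) = B * !![(1 : ℂ), 0; 0, -1] := by
    rw [← hBA, neg_neg]
  refine ⟨antidiag_aux F hF2 hAF, antidiag_aux B hB2 hBA', ?_⟩
  intro hBF f b hf hb hFe hBe
  subst hFe hBe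
  have h00 := congrFun (congrFun hBF 0) 0
  simp [Matrix.mul_apply, Fin.sum_univ_two] at h00
  field_simp at h00
  linear_combination -h00
end

section
/- Let b ∈ ℂ with b² = −1, and set A = [[1,0],[0,−1]], S = [[0,1],[1,0]], F = S, B = [[0,b],[b⁻¹,0]]. Suppose D and E are invertible 2×2 complex matrices satisfying D·F = E, F·D·A = D, and A·D·B = D. Then there is a nonzero d ∈ ℂ such that D = d·[[1,b],[1,−b]] and E = d·[[b,1],[−b,1]]. -/
open Matrix

/-- With `A = diag(1,−1)`, `F = S` and `B = [[0,b],[b⁻¹,0]]` (where `b² = −1`),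
the pentagon relations `DF = E`, `FDA = D`, `ADB = D` force
`D = d·[[1,b],[1,−b]]` and `E = d·[[b,1],[−b,1]]` for some nonzero scalar `d`. -/
theorem DE_form_of_pentagon
    (b : ℂ) (hb : b ^ 2 = -1)
    (D E : Matrix (Fin 2) (Fin 2) ℂ) (hD : IsUnit D) (hE : IsUnit E)
    (e1 : D * !![(0 : ℂ), 1; 1, 0] = E)
    (e2 : !![(0 : ℂ), 1; 1, 0] * D * !![(1 : ℂ), 0; 0, -1] = D)
    (e3 : !![(1 : ℂ), 0; 0, -1] * D * !![0, b; b⁻¹, 0] = D) :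
    ∃ d : ℂ, d ≠ 0 ∧ D = d • !![1, b; 1, -b] ∧ E = d • !![b, 1; -b, 1] := by
  have hbne : b ≠ 0 := by
    intro h; rw [h] at hb; norm_num at hb
  have h200 := congrFun (congrFun e2 0) 0
  have h201 := congrFun (congrFun e2 0) 1
  have h301 := congrFun (congrFun e3 0) 1
  simp [Matrix.mul_apply, Matrix.vecMul, dotProduct, Fin.sum_univ_two]
    at h200 h201 h301
  -- h200 : D 1 0 = D 0 0, h201 : -(D 1 1) = D 0 1, h301 : D 0 0 * b = D 0 1
  have h10 : D 1 0 = D 0 0 := h200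
  have h01 : D 0 1 = D 0 0 * b := h301.symm
  have h11 : D 1 1 = -(D 0 0 * b) := by
    have := h201; rw [h01] at this; linear_combination -this
  refine ⟨D 0 0, ?_, ?_, ?_⟩
  · intro h0
    have hdet : D.det = 0 := by
      rw [Matrix.det_fin_two, h10, h01, h11, h0]; ring
    have := (Matrix.isUnit_iff_isUnit_det D).mp hD
    rw [hdet] at this
    exact this.ne_zero rfl
  · ext i j
    fin_cases i <;> fin_cases j <;> simp [h10, h01, h11]
  · rw [← e1]
    ext i j
    fin_cases i <;> fin_cases j <;>
      simp [Matrix.mul_apply, Matrix.vecMul, dotProduct, Fin.sum_univ_two,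
        h10, h01, h11]
end

section
/- With the explicit data below (b = i, φ = (√3−1)/2, d = (1/√2)e^{7πi/12}, etc.), the following fourteen matrix equations hold: F² = I₂; −A·F = F·A; A² = I₂; −B·F = F·B; −B·A = A·B; B² = I₂; E·F = D; D·F = E; F·D·A = D; F·E·A = −E; A·D·B = D; A·E·B = −E; B·E = D; B·D = E. -/
open Matrix Complex

noncomputable section

def bC : ℂ := Complex.I
def dC : ℂ := (1 / (Real.sqrt 2 : ℂ)) * Complex.exp (7 * Real.pi * Complex.I / 12)

def AM : Matrix (Fin 2) (Fin 2) ℂ := !![1, 0; 0, -1]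
def SM : Matrix (Fin 2) (Fin 2) ℂ := !![0, 1; 1, 0]
def FM : Matrix (Fin 2) (Fin 2) ℂ := SM
def BM : Matrix (Fin 2) (Fin 2) ℂ := !![0, bC; bC⁻¹, 0]
def DM : Matrix (Fin 2) (Fin 2) ℂ := dC • !![1, bC; 1, -bC]
def EM : Matrix (Fin 2) (Fin 2) ℂ := dC • !![bC, 1; -bC, 1]

/-- The explicit solution satisfies the fourteen two-dimensional pentagon
equations (with `g = −1`). -/
theorem two_dim_pentagon_hold :
    FM * FM = 1 ∧
    -(AM * FM) = FM * AM ∧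
    AM * AM = 1 ∧
    -(BM * FM) = FM * BM ∧
    -(BM * AM) = AM * BM ∧
    BM * BM = 1 ∧
    EM * FM = DM ∧
    DM * FM = EM ∧
    FM * DM * AM = DM ∧
    FM * EM * AM = -EM ∧
    AM * DM * BM = DM ∧
    AM * EM * BM = -EM ∧
    BM * EM = DM ∧
    BM * DM = EM := by
  constructor <;> [skip; constructor] <;> try constructor
  all_goals try constructor
  all_goals try constructor
  all_goals try constructor
  all_goals try constructor
  all_goals try constructor
  all_goals try constructor
  all_goals try constructor
  all_goals try constructor
  all_goals try constructor
  all_goals try constructor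
  all_goals try constructor
  all_goals
    ext i j
    fin_cases i <;> fin_cases j <;>
      simp [AM, BM, DM, EM, FM, SM, bC, Matrix.mul_apply, Fin.sum_univ_two,
        Complex.inv_I, Matrix.one_apply] <;> ring_nf <;> simp [Complex.I_sq] <;> ring
end
end

section
/- Let b be a nonzero complex number and suppose there exist nonzero complex numbers r1, r2 and an invertible 2×2 complex matrix R = [[k,l],[m,n]] satisfying the four equations: r1²·A = r1·B_b·S; r2⁻²·A = r2⁻¹·B_b·S; r2·R·S = S·R·A; r1⁻¹·R⁻¹·S = S·R⁻¹·A, where A = [[1,0],[0,−1]], S = [[0,1],[1,0]], B_b = [[0,b],[b⁻¹,0]]. Then b² = −1, r1 = b, r2 = b⁻¹ = −b, k = n = 0, and m = −b·l (with l ≠ 0). -/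
open Matrix

/-- The four hexagon equations `H^x_{y,x,x}`, `H̄^x_{y,x,x}`, `H^x_{x,y,x}`,
`H̄^x_{x,y,x}` force `b² = −1`, `r1 = b`, `r2 = b⁻¹ = −b`, `k = n = 0` and
`m = −b·l` with `l ≠ 0`. -/
theorem hexagon_constraints
    (b : ℂ) (hb : b ≠ 0)
    (r1 r2 : ℂ) (hr1 : r1 ≠ 0) (hr2 : r2 ≠ 0)
    (k l m n : ℂ) (R : Matrix (Fin 2) (Fin 2) ℂ) (hR : R = !![k, l; m, n])
    (hRu : IsUnit R)
    (e1 : r1 ^ 2 • (!![(1 : ℂ), 0; 0, -1]) = r1 • (!![0, b; b⁻¹, 0] * !![(0 : ℂ), 1; 1, 0]))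
    (e2 : (r2⁻¹) ^ 2 • (!![(1 : ℂ), 0; 0, -1]) = r2⁻¹ • (!![0, b; b⁻¹, 0] * !![(0 : ℂ), 1; 1, 0]))
    (e3 : r2 • (R * !![(0 : ℂ), 1; 1, 0]) = !![(0 : ℂ), 1; 1, 0] * R * !![(1 : ℂ), 0; 0, -1])
    (e4 : r1⁻¹ • (R⁻¹ * !![(0 : ℂ), 1; 1, 0]) = !![(0 : ℂ), 1; 1, 0] * R⁻¹ * !![(1 : ℂ), 0; 0, -1]) :
    b ^ 2 = -1 ∧ r1 = b ∧ r2 = b⁻¹ ∧ b⁻¹ = -b ∧ k = 0 ∧ n = 0 ∧ m = -b * l ∧ l ≠ 0 := by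
  subst hR
  have hdet : (!![k, l; m, n]).det ≠ 0 := ((Matrix.isUnit_iff_isUnit_det _).mp hRu).ne_zero
  rw [Matrix.det_fin_two_of] at hdet
  rw [Matrix.inv_def, Matrix.adjugate_fin_two, Ring.inverse_eq_inv,
    Matrix.det_fin_two_of] at e4
  have a00 := congrFun (congrFun e1 0) 0
  have a11 := congrFun (congrFun e1 1) 1
  have c00 := congrFun (congrFun e2 0) 0
  have d00 := congrFun (congrFun e3 0) 0
  have d01 := congrFun (congrFun e3 0) 1
  have f01 := congrFun (congrFun e4 0) 1
  simp [Matrix.mul_apply, Fin.sum_univ_two] at a00 a11 c00 d00 d01 f01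
  -- r1 = b
  have hr1b : r1 = b := mul_left_cancel₀ hr1 (by linear_combination a00)
  -- b² = -1
  have hb2 : b ^ 2 = -1 := by
    rw [hr1b, mul_inv_cancel₀ hb] at a11
    linear_combination -a11
  -- b⁻¹ = -b
  have hbi : b⁻¹ = -b := by
    apply mul_left_cancel₀ hb
    rw [mul_inv_cancel₀ hb]
    linear_combination hb2
  -- r2 = b⁻¹
  have hr2b : r2 = b⁻¹ := by
    have h1 : r2 * b = 1 := by
      have h2 : r2 ^ 2 * ((r2 ^ 2)⁻¹) = r2 ^ 2 * (r2⁻¹ * b) := by rw [c00]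
      rw [mul_inv_cancel₀ (pow_ne_zero 2 hr2)] at h2
      rw [h2]; field_simp
    exact eq_inv_of_mul_eq_one_left h1
  -- cleared forms
  have hn1 : n = b * k := by
    rw [hr2b, hbi] at d01
    linear_combination d01
  have hk1 : k = b * n := by
    have F1 : r1⁻¹ * n = -k :=
      mul_left_cancel₀ (inv_ne_zero hdet) (by linear_combination f01)
    rw [hr1b, hbi] at F1
    linear_combination F1
  have hk : k = 0 := by
    have h2 : 2 * k = 0 := by linear_combination hk1 + b * hn1 + k * hb2
    linear_combination h2 / 2
  have hn : n = 0 := by rw [hn1, hk, mul_zero]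
  have hm : m = -b * l := by
    rw [hr2b, hbi] at d00
    linear_combination -d00
  refine ⟨hb2, hr1b, hr2b, hbi, hk, hn, hm, ?_⟩
  intro hl
  apply hdet
  rw [hk, hn, hl]
  ring
end

section
/- Let b ∈ ℂ with b² = −1 and let d be any nonzero complex number. There do not exist nonzero complex numbers r1, r2, r3 and an invertible 2×2 complex matrix R satisfying all five equations: r1²·A = r1·B_b·S; r2⁻²·A = r2⁻¹·B_b·S; r2·R·S = S·R·A; r1⁻¹·R⁻¹·S = S·R⁻¹·A; d·R·C·R = d²·r3·C², where A = [[1,0],[0,−1]], S = [[0,1],[1,0]], B_b = [[0,b],[b⁻¹,0]], C = [[1,b],[1,−b]]. Consequently the fusion categories with fusion rules x⊗x ≅ 1 ⊕ y ⊕ x ⊕ x, x⊗y ≅ y⊗x ≅ x, y⊗y ≅ 1 admit no braiding. -/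
open Matrix

/-- The five hexagon equations `H^x_{y,x,x}`, `H̄^x_{y,x,x}`, `H^x_{x,y,x}`,
`H̄^x_{x,y,x}`, `H^1_{x,x,x}` have no simultaneous solution; hence the fusion
categories with fusion rules `x⊗x ≅ 1 ⊕ y ⊕ x ⊕ x`, `x⊗y ≅ y⊗x ≅ x`,
`y⊗y ≅ 1` admit no braiding. -/
theorem no_braiding
    (b : ℂ) (hb : b ^ 2 = -1) (d : ℂ) (hd : d ≠ 0) :
    ¬ ∃ (r1 r2 r3 : ℂ) (R : Matrix (Fin 2) (Fin 2) ℂ),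
        r1 ≠ 0 ∧ r2 ≠ 0 ∧ r3 ≠ 0 ∧ IsUnit R ∧
        r1 ^ 2 • (!![(1 : ℂ), 0; 0, -1]) =
          r1 • (!![0, b; b⁻¹, 0] * !![(0 : ℂ), 1; 1, 0]) ∧
        (r2⁻¹) ^ 2 • (!![(1 : ℂ), 0; 0, -1]) =
          r2⁻¹ • (!![0, b; b⁻¹, 0] * !![(0 : ℂ), 1; 1, 0]) ∧
        r2 • (R * !![(0 : ℂ), 1; 1, 0]) =
          !![(0 : ℂ), 1; 1, 0] * R * !![(1 : ℂ), 0; 0, -1] ∧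
        r1⁻¹ • (R⁻¹ * !![(0 : ℂ), 1; 1, 0]) =
          !![(0 : ℂ), 1; 1, 0] * R⁻¹ * !![(1 : ℂ), 0; 0, -1] ∧
        d • (R * !![1, b; 1, -b] * R) =
          (d ^ 2 * r3) • (!![1, b; 1, -b] * !![1, b; 1, -b]) := by
  rintro ⟨r1, r2, r3, R, h1, h2, h3, hU, e1, e2, e3, e4, e5⟩
  have hb0 : b ≠ 0 := by intro h; rw [h] at hb; norm_num at hb
  have hbi : b⁻¹ = -b := by
    field_simp
    linear_combination hb
  -- r1 = b
  have h00 := Matrix.ext_iff.mpr e1 0 0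
  simp [Matrix.mul_apply, Fin.sum_univ_two] at h00
  have hr1 : r1 = b := by
    have h : r1 * r1 = r1 * b := by linear_combination h00
    exact mul_left_cancel₀ h1 h
  -- r2 = -b
  have h00' := Matrix.ext_iff.mpr e2 0 0
  simp [Matrix.mul_apply, Fin.sum_univ_two] at h00'
  have hr2i : r2⁻¹ = b := by
    have h : r2⁻¹ * r2⁻¹ = r2⁻¹ * b := by linear_combination h00'
    exact mul_left_cancel₀ (inv_ne_zero h2) h
  have hr2 : r2 = -b := by rw [← hbi, ← hr2i, inv_inv]
  have hr1i : r1⁻¹ = -b := by rw [hr1, hbi]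
  -- eq3 entries
  have E3 := Matrix.ext_iff.mpr e3
  have g00 := E3 0 0
  have g10 := E3 1 0
  simp [Matrix.mul_apply, Matrix.vecMul, dotProduct,
    Fin.sum_univ_two, hr2] at g00 g10
  -- g00 : -b * R 0 1 = R 1 0,  g10 : -b * R 1 1 = R 0 0  (check forms below)
  -- eq4 entries
  have E4 := Matrix.ext_iff.mpr e4
  have f00 := E4 0 0
  have f10 := E4 1 0
  simp [Matrix.mul_apply, Matrix.vecMul, dotProduct,
    Fin.sum_univ_two, hr1i] at f00 f10
  -- R * R⁻¹ = 1
  have hdet : IsUnit R.det := (Matrix.isUnit_iff_isUnit_det R).mp hU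
  have hRM := Matrix.mul_nonsing_inv R hdet
  have U := Matrix.ext_iff.mpr hRM
  have u00 := U 0 0
  have u01 := U 0 1
  have u10 := U 1 0
  have u11 := U 1 1
  simp [Matrix.mul_apply, Fin.sum_univ_two, Matrix.one_apply] at u00 u01 u10 u11
  have hRr : R 1 0 = -(b * R 0 1) := g00.symm
  have hS : R 1 1 = b * R 0 0 := by linear_combination b * g10 + R 1 1 * hb
  have hM1 : R⁻¹ 0 0 = -(b * R⁻¹ 1 1) := f10.symm
  have hM3 : R⁻¹ 1 0 = -(b * R⁻¹ 0 1) := f00.symm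
  rw [hM1, hM3] at u00
  rw [hRr, hS, hM1, hM3] at u10
  rw [hRr, hS] at u11
  have hqm2 : b * (R 0 1 * R⁻¹ 0 1) = -1 := by linear_combination (-u00 - u11) / 2
  have hu10' : R 0 0 * R⁻¹ 0 1 - R 0 1 * R⁻¹ 1 1 = 0 := by
    linear_combination u10 + (R 0 0 * R⁻¹ 0 1 - R 0 1 * R⁻¹ 1 1) * hb
  have hpm2 : R 0 0 * R⁻¹ 0 1 = 0 := by linear_combination (u01 + hu10') / 2
  have hQ : R 0 1 ≠ 0 := by intro h; rw [h] at hqm2; simp at hqm2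
  have hM2ne : R⁻¹ 0 1 ≠ 0 := by intro h; rw [h] at hqm2; simp at hqm2
  have hP : R 0 0 = 0 := (mul_eq_zero.mp hpm2).resolve_right hM2ne
  have hS0 : R 1 1 = 0 := by rw [hS, hP, mul_zero]
  -- eq5
  have E5 := Matrix.ext_iff.mpr e5
  have k00 := E5 0 0
  have k01 := E5 0 1
  simp [Matrix.mul_apply, Fin.sum_univ_two] at k00 k01
  rw [hP, hRr] at k00
  rw [hP, hS0] at k01
  have hdq : d * R 0 1 ^ 2 = 0 := by
    linear_combination (k01 - k00) / 2 + ((d * R 0 1 ^ 2 - d ^ 2 * r3) / 2) * hb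
  have hQ0 : R 0 1 = 0 := by
    have h2 := (mul_eq_zero.mp hdq).resolve_left hd
    exact pow_eq_zero_iff two_ne_zero |>.mp h2
  exact hQ hQ0
end
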